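/- Let G = ℤ₂ ⋉ ℤ₂ be the semidirect product of the additive group of 2-adic integers ℤ₂ acting on ℤ₂, where t ∈ ℤ₂ acts as the identity if t ≡ 0 (mod 2) and as inversion (negation) if t ≡ 1 (mod 2) (i.e., the action factors through ℤ₂ → ℤ/2ℤ with the nontrivial element acting by x ↦ −x). Then G is torsion-free (its only element of finite order is the identity) and G is not a CA group. -/

import Mathlib

open Multiplicative

/-- Negation of `ℤ₂`, viewed as a multiplicative automorphism of the
(multiplicatively written) additive group of 2-adic integers. -/
noncomputable def negAut : MulAut (Multiplicative ℤ_[2]) :=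
  MulEquiv.inv (Multiplicative ℤ_[2])

lemma negAut_sq : negAut * negAut = 1 := by
  ext x
  exact inv_inv x

/-- The action of `ℤ₂` on `ℤ₂`: `t` acts as the identity if `t ≡ 0 (mod 2)`
and by negation if `t ≡ 1 (mod 2)`. -/
noncomputable def phi : Multiplicative ℤ_[2] →* MulAut (Multiplicative ℤ_[2]) where
  toFun t := if PadicInt.toZMod (t.toAdd) = 0 then 1 else negAut
  map_one' := by simp
  map_mul' a b := by
    have hcases : ∀ x : ZMod 2, x = 0 ∨ x = 1 := by decide
    have hab : PadicInt.toZMod ((a * b).toAdd) =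
        PadicInt.toZMod (a.toAdd) + PadicInt.toZMod (b.toAdd) := by
      rw [toAdd_mul, map_add]
    rcases hcases (PadicInt.toZMod (a.toAdd)) with ha | ha <;>
      rcases hcases (PadicInt.toZMod (b.toAdd)) with hb | hb <;>
        simp only [hab, ha, hb] <;> norm_num
    exact negAut_sq.symm

lemma mult_torsionfree (a : Multiplicative ℤ_[2]) (n : ℕ) (hn : 0 < n)
    (h : a ^ n = 1) : a = 1 := by
  have h2 : (n : ℤ_[2]) * a.toAdd = 0 := by
    have := congrArg Multiplicative.toAdd h
    simpa [toAdd_pow, nsmul_eq_mul] using this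
  have hne : (n : ℤ_[2]) ≠ 0 := Nat.cast_ne_zero.mpr hn.ne'
  have h3 : a.toAdd = 0 := by
    rcases mul_eq_zero.mp h2 with h | h
    · exact absurd h hne
    · exact h
  have := congrArg Multiplicative.ofAdd h3
  simpa using this

lemma phi_one : phi (ofAdd (1 : ℤ_[2])) = negAut := by
  have h1 : PadicInt.toZMod ((ofAdd (1 : ℤ_[2])).toAdd) ≠ 0 := by
    show PadicInt.toZMod (1 : ℤ_[2]) ≠ 0
    rw [map_one]
    decide
  show (if PadicInt.toZMod ((ofAdd (1 : ℤ_[2])).toAdd) = 0 then 1 else negAut) = negAut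
  rw [if_neg h1]

lemma phi_two : phi (ofAdd (2 : ℤ_[2])) = 1 := by
  have h0 : PadicInt.toZMod ((ofAdd (2 : ℤ_[2])).toAdd) = 0 := by
    show PadicInt.toZMod (2 : ℤ_[2]) = 0
    rw [map_ofNat]
    decide
  show (if PadicInt.toZMod ((ofAdd (2 : ℤ_[2])).toAdd) = 0 then 1 else negAut) = 1
  rw [if_pos h0]

/-- The semidirect product `ℤ₂ ⋉ ℤ₂` (written multiplicatively), where the
second factor acts on the first through reduction mod 2, the nontrivial
element acting by negation. It is torsion-free but not a CA-group. -/
theorem torsionFree_and_not_CA :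
    (∀ g : SemidirectProduct (Multiplicative ℤ_[2]) (Multiplicative ℤ_[2]) phi,
      IsOfFinOrder g → g = 1) ∧
    ¬ (∀ g : SemidirectProduct (Multiplicative ℤ_[2]) (Multiplicative ℤ_[2]) phi,
        g ≠ 1 → ∀ h₁ h₂ : SemidirectProduct (Multiplicative ℤ_[2]) (Multiplicative ℤ_[2]) phi,
          Commute g h₁ → Commute g h₂ → Commute h₁ h₂) := by
  constructor
  · intro g hg
    obtain ⟨n, hn, hpow⟩ := isOfFinOrder_iff_pow_eq_one.mp hg
    have hr : g.right = 1 := by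
      apply mult_torsionfree _ n hn
      have := congrArg SemidirectProduct.rightHom hpow
      rw [map_pow, map_one] at this
      simpa [SemidirectProduct.rightHom_eq_right] using this
    have hgl : g = SemidirectProduct.inl g.left := by
      ext
      · rfl
      · simpa [SemidirectProduct.right_inl] using hr
    rw [hgl] at hpow
    have hl : g.left ^ n = 1 := by
      refine SemidirectProduct.inl_injective (φ := phi) ?_
      rw [MonoidHom.map_pow, hpow, map_one]
    have := mult_torsionfree _ n hn hl
    rw [hgl, this, map_one]
  · intro h
    set g : SemidirectProduct (Multiplicative ℤ_[2]) (Multiplicative ℤ_[2]) phi :=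
      SemidirectProduct.inr (ofAdd (2 : ℤ_[2])) with hgdef
    set h₁ : SemidirectProduct (Multiplicative ℤ_[2]) (Multiplicative ℤ_[2]) phi :=
      SemidirectProduct.inl (ofAdd (1 : ℤ_[2])) with h1def
    set h₂ : SemidirectProduct (Multiplicative ℤ_[2]) (Multiplicative ℤ_[2]) phi :=
      SemidirectProduct.inr (ofAdd (1 : ℤ_[2])) with h2def
    have hgne : g ≠ 1 := by
      intro hc
      have h2 : SemidirectProduct.inr (ofAdd (2 : ℤ_[2])) =
          (SemidirectProduct.inr (1 : Multiplicative ℤ_[2]) :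
            SemidirectProduct (Multiplicative ℤ_[2]) (Multiplicative ℤ_[2]) phi) := by
        rw [map_one]; exact hc
      have h3 := SemidirectProduct.inr_injective h2
      have h4 := congrArg Multiplicative.toAdd h3
      simp only [toAdd_ofAdd, toAdd_one] at h4
      exact two_ne_zero h4
    have hc1 : Commute g h₁ := by
      show g * h₁ = h₁ * g
      ext
      · show g.left * phi g.right h₁.left = h₁.left * phi h₁.right g.left
        simp [hgdef, h1def, SemidirectProduct.left_inl, SemidirectProduct.left_inr,
          SemidirectProduct.right_inl, SemidirectProduct.right_inr, phi_two]
      · show g.right * h₁.right = h₁.right * g.right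
        exact mul_comm _ _
    have hc2 : Commute g h₂ := by
      show g * h₂ = h₂ * g
      rw [hgdef, h2def, ← map_mul, mul_comm, map_mul]
    have hcomm := h g hgne h₁ h₂ hc1 hc2
    have hcontra := congrArg SemidirectProduct.left hcomm
    rw [SemidirectProduct.mul_left, SemidirectProduct.mul_left] at hcontra
    simp only [h1def, h2def, SemidirectProduct.left_inl, SemidirectProduct.left_inr,
      SemidirectProduct.right_inl, SemidirectProduct.right_inr, map_one, mul_one, one_mul,
      phi_one] at hcontra
    have hneg : negAut (ofAdd (1 : ℤ_[2])) = ofAdd (-1 : ℤ_[2]) := by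
      show (ofAdd (1 : ℤ_[2]))⁻¹ = ofAdd (-1 : ℤ_[2])
      rw [← ofAdd_neg]
    rw [hneg] at hcontra
    have h4 := congrArg Multiplicative.toAdd hcontra
    simp only [toAdd_ofAdd] at h4
    have h5 : (2 : ℤ_[2]) = 0 := by linear_combination h4
    exact two_ne_zero h5
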